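/- Let n ≥ 1 and let w ∈ S^B_n be a signed permutation. Then dis(w)/2 = ℓ(w) if and only if w globally avoids the pattern 321. -/

import Mathlib

namespace Stmt3

/-- The Coxeter generator `sᵢ` of the hyperoctahedral group, acting on `ℤ`:
`s₀` swaps `-1` and `1`; for `i ≥ 1`, `sᵢ` swaps `i` with `i+1` and `-i` with `-(i+1)`. -/
def sB (i : ℕ) : Equiv.Perm ℤ :=
  if i = 0 then Equiv.swap (-1 : ℤ) 1
  else Equiv.swap (i : ℤ) ((i : ℤ) + 1) * Equiv.swap (-(i : ℤ)) (-((i : ℤ) + 1))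

/-- `w` is a signed permutation in `S^B_n`: a bijection of `ℤ` with
`w(-i) = -w(i)` for all `i` and `w(i) = i` whenever `|i| > n`. -/
def IsSignedPerm (n : ℕ) (w : Equiv.Perm ℤ) : Prop :=
  (∀ i : ℤ, w (-i) = -(w i)) ∧ ∀ i : ℤ, (n : ℤ) < |i| → w i = i

/-- `l` is a word for `w` in the letters `{0, …, n-1}`. -/
def IsWordB (n : ℕ) (w : Equiv.Perm ℤ) (l : List ℕ) : Prop :=
  (∀ i ∈ l, i + 1 ≤ n) ∧ (l.map sB).prod = w

/-- The Coxeter length of `w`: the minimal length of a word for `w`. -/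
noncomputable def lenB (n : ℕ) (w : Equiv.Perm ℤ) : ℕ :=
  sInf {m | ∃ l : List ℕ, IsWordB n w l ∧ l.length = m}

/-- The disarray `dis(w) = ∑_{i=1}^n |w(i) - i|`. -/
noncomputable def disB (n : ℕ) (w : Equiv.Perm ℤ) : ℤ :=
  ∑ i ∈ Finset.Icc (1 : ℤ) (n : ℤ), |w i - i|

/-- The unfrozen integers for `S^B_n` are `{-n, …, -1, 1, …, n}`. -/
def Unfrozen (n : ℕ) (i : ℤ) : Prop := i ≠ 0 ∧ |i| ≤ (n : ℤ)

/-- `w` globally contains the pattern `321`: there are unfrozen integers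
`i < j < k` with `w(i) > w(j) > w(k)`. -/
def GloballyContains321 (n : ℕ) (w : Equiv.Perm ℤ) : Prop :=
  ∃ i j k : ℤ, Unfrozen n i ∧ Unfrozen n j ∧ Unfrozen n k ∧
    i < j ∧ j < k ∧ w i > w j ∧ w j > w k

lemma iabs (a : ℤ) : |a| = if 0 ≤ a then a else -a := by
  split_ifs with h
  · exact abs_of_nonneg h
  · exact abs_of_neg (by omega)
lemma sB_zero_apply (x : ℤ) :
    sB 0 x = if x = -1 then 1 else if x = 1 then -1 else x := by
  simp [sB, Equiv.swap_apply_def]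
lemma sB_pos_apply (i : ℕ) (hi : i ≠ 0) (x : ℤ) :
    sB i x = if x = (i:ℤ) then (i:ℤ)+1 else if x = (i:ℤ)+1 then (i:ℤ)
      else if x = -(i:ℤ) then -((i:ℤ)+1) else if x = -((i:ℤ)+1) then -(i:ℤ) else x := by
  have hi' : (1:ℤ) ≤ (i:ℤ) := by exact_mod_cast Nat.one_le_iff_ne_zero.mpr hi
  simp only [sB, if_neg hi, Equiv.Perm.mul_apply, Equiv.swap_apply_def]
  split_ifs <;> first | omega | tauto
lemma sB_invol (i : ℕ) (x : ℤ) : sB i (sB i x) = x := by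
  rcases Nat.eq_zero_or_pos i with h | h
  · subst h; simp only [sB_zero_apply]; split_ifs <;> first | omega | tauto
  · have hi : i ≠ 0 := h.ne'
    have hi' : (1:ℤ) ≤ (i:ℤ) := by exact_mod_cast h
    simp only [sB_pos_apply i hi]; split_ifs <;> first | omega | tauto
lemma sB_sq (i : ℕ) : sB i * sB i = 1 := by
  ext x; simpa using sB_invol i x
lemma sp_one (n : ℕ) : IsSignedPerm n 1 := by
  constructor <;> intro i <;> simp
lemma sp_mul {n : ℕ} {u v : Equiv.Perm ℤ} (hu : IsSignedPerm n u) (hv : IsSignedPerm n v) :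
    IsSignedPerm n (u * v) := by
  refine ⟨fun i => ?_, fun i hi => ?_⟩
  · simp only [Equiv.Perm.mul_apply, hv.1, hu.1]
  · simp only [Equiv.Perm.mul_apply, hv.2 i hi, hu.2 i hi]
lemma sp_sB {n : ℕ} {i : ℕ} (h : i + 1 ≤ n) : IsSignedPerm n (sB i) := by
  have hn : (1:ℤ) ≤ (n:ℤ) := by exact_mod_cast Nat.one_le_of_lt (Nat.lt_of_lt_of_le (Nat.lt_succ_self i) h)
  have hin : (i:ℤ) + 1 ≤ (n:ℤ) := by exact_mod_cast h
  rcases Nat.eq_zero_or_pos i with h0 | h0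
  · subst h0
    constructor
    · intro x; simp only [sB_zero_apply]; split_ifs <;> omega
    · intro x hx; rw [iabs] at hx; simp only [sB_zero_apply]
      split_ifs at hx ⊢ <;> omega
  · have hi : i ≠ 0 := h0.ne'
    have hi' : (1:ℤ) ≤ (i:ℤ) := by exact_mod_cast h0
    constructor
    · intro x; simp only [sB_pos_apply i hi]; split_ifs <;> omega
    · intro x hx; rw [iabs] at hx; simp only [sB_pos_apply i hi]
      split_ifs at hx ⊢ <;> omega
lemma sp_prod {n : ℕ} (l : List ℕ) (h : ∀ i ∈ l, i + 1 ≤ n) :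
    IsSignedPerm n (l.map sB).prod := by
  induction l with
  | nil => simpa using sp_one n
  | cons a t ih =>
    simp only [List.map_cons, List.prod_cons]
    exact sp_mul (sp_sB (h a (by simp))) (ih fun i hi => h i (by simp [hi]))
lemma sp_zero {n : ℕ} {w : Equiv.Perm ℤ} (hw : IsSignedPerm n w) : w 0 = 0 := by
  have := hw.1 0; simp at this; omega
lemma sp_bound {n : ℕ} {w : Equiv.Perm ℤ} (hw : IsSignedPerm n w) {x : ℤ}
    (hx : |x| ≤ (n:ℤ)) : |w x| ≤ (n:ℤ) := by
  by_contra hb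
  push_neg at hb
  have h1 : w (w x) = w x := hw.2 _ hb
  have h2 : w x = x := w.injective h1
  rw [h2] at hb
  omega
lemma sp_ne_zero {n : ℕ} {w : Equiv.Perm ℤ} (hw : IsSignedPerm n w) {x : ℤ}
    (hx : x ≠ 0) : w x ≠ 0 := by
  intro h
  exact hx (w.injective (h.trans (sp_zero hw).symm))

lemma dis_nonneg (n : ℕ) (w : Equiv.Perm ℤ) : 0 ≤ disB n w :=
  Finset.sum_nonneg fun _ _ => abs_nonneg _

lemma dis_pos {n : ℕ} {w : Equiv.Perm ℤ} {j : ℤ} (hj : j ∈ Finset.Icc (1:ℤ) (n:ℤ))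
    (hne : w j ≠ j) : 1 ≤ disB n w := by
  have h1 : 1 ≤ |w j - j| := by rw [iabs]; split_ifs <;> omega
  calc (1:ℤ) ≤ |w j - j| := h1
    _ ≤ disB n w := Finset.single_le_sum (fun k _ => abs_nonneg (w k - k)) hj

lemma dis_eq_zero {n : ℕ} {w : Equiv.Perm ℤ} (h : disB n w = 0) {j : ℤ}
    (hj : j ∈ Finset.Icc (1:ℤ) (n:ℤ)) : w j = j := by
  by_contra hne
  have := dis_pos hj hne
  omega

lemma dis_mul_sB_zero {n : ℕ} (hn : 1 ≤ n) {w : Equiv.Perm ℤ} (hw : IsSignedPerm n w) :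
    disB n (w * sB 0) = disB n w + (|(-(w 1)) - 1| - |w 1 - 1|) := by
  have h1 : (1:ℤ) ∈ Finset.Icc (1:ℤ) (n:ℤ) := by
    simp [Finset.mem_Icc]; exact_mod_cast hn
  have e1 : disB n (w * sB 0) = |(w * sB 0) 1 - 1| +
      ∑ j ∈ (Finset.Icc (1:ℤ) (n:ℤ)).erase 1, |(w * sB 0) j - j| :=
    (Finset.add_sum_erase _ _ h1).symm
  have e2 : disB n w = |w 1 - 1| + ∑ j ∈ (Finset.Icc (1:ℤ) (n:ℤ)).erase 1, |w j - j| :=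
    (Finset.add_sum_erase _ _ h1).symm
  have hs : ∑ j ∈ (Finset.Icc (1:ℤ) (n:ℤ)).erase 1, |(w * sB 0) j - j| =
      ∑ j ∈ (Finset.Icc (1:ℤ) (n:ℤ)).erase 1, |w j - j| := by
    refine Finset.sum_congr rfl fun j hj => ?_
    rw [Finset.mem_erase, Finset.mem_Icc] at hj
    have : sB 0 j = j := by rw [sB_zero_apply]; split_ifs <;> omega
    rw [Equiv.Perm.mul_apply, this]
  have hv : (w * sB 0) 1 = -(w 1) := by
    rw [Equiv.Perm.mul_apply]
    have : sB 0 (1:ℤ) = -1 := by rw [sB_zero_apply]; norm_num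
    rw [this]
    exact hw.1 1
  rw [e1, e2, hs, hv]
  ring

lemma dis_mul_sB_pos {n : ℕ} {i : ℕ} (hi : i ≠ 0) (hin : i + 1 ≤ n) (w : Equiv.Perm ℤ) :
    disB n (w * sB i) = disB n w +
      ((|w ((i:ℤ)+1) - (i:ℤ)| + |w (i:ℤ) - ((i:ℤ)+1)|) -
       (|w (i:ℤ) - (i:ℤ)| + |w ((i:ℤ)+1) - ((i:ℤ)+1)|)) := by
  have hi' : (1:ℤ) ≤ (i:ℤ) := by exact_mod_cast Nat.one_le_iff_ne_zero.mpr hi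
  have hin' : (i:ℤ) + 1 ≤ (n:ℤ) := by exact_mod_cast hin
  have h1 : (i:ℤ) ∈ Finset.Icc (1:ℤ) (n:ℤ) := by rw [Finset.mem_Icc]; omega
  have h2 : ((i:ℤ)+1) ∈ (Finset.Icc (1:ℤ) (n:ℤ)).erase (i:ℤ) := by
    rw [Finset.mem_erase, Finset.mem_Icc]; omega
  have key : ∀ u : Equiv.Perm ℤ, disB n u = |u (i:ℤ) - (i:ℤ)| + (|u ((i:ℤ)+1) - ((i:ℤ)+1)| +
      ∑ j ∈ ((Finset.Icc (1:ℤ) (n:ℤ)).erase (i:ℤ)).erase ((i:ℤ)+1), |u j - j|) := by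
    intro u
    rw [Finset.add_sum_erase _ (fun j => |u j - j|) h2, Finset.add_sum_erase _ (fun j => |u j - j|) h1]
    rfl
  have hs : ∑ j ∈ ((Finset.Icc (1:ℤ) (n:ℤ)).erase (i:ℤ)).erase ((i:ℤ)+1), |(w * sB i) j - j| =
      ∑ j ∈ ((Finset.Icc (1:ℤ) (n:ℤ)).erase (i:ℤ)).erase ((i:ℤ)+1), |w j - j| := by
    refine Finset.sum_congr rfl fun j hj => ?_
    simp only [Finset.mem_erase, Finset.mem_Icc] at hj
    have : sB i j = j := by rw [sB_pos_apply i hi]; split_ifs <;> omega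
    rw [Equiv.Perm.mul_apply, this]
  have hvi : (w * sB i) (i:ℤ) = w ((i:ℤ)+1) := by
    rw [Equiv.Perm.mul_apply]
    congr 1
    rw [sB_pos_apply i hi]; split_ifs <;> omega
  have hvi1 : (w * sB i) ((i:ℤ)+1) = w (i:ℤ) := by
    rw [Equiv.Perm.mul_apply]
    congr 1
    rw [sB_pos_apply i hi]; split_ifs <;> omega
  rw [key (w * sB i), key w, hs, hvi, hvi1]
  ring

lemma dis_step {n : ℕ} {i : ℕ} {w : Equiv.Perm ℤ} (hw : IsSignedPerm n w)
    (hin : i + 1 ≤ n) :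
    disB n (w * sB i) ≤ disB n w + 2 ∧ disB n w ≤ disB n (w * sB i) + 2 := by
  rcases Nat.eq_zero_or_pos i with h0 | h0
  · subst h0
    rw [dis_mul_sB_zero hin hw]
    constructor <;> · simp only [iabs]; split_ifs <;> omega
  · rw [dis_mul_sB_pos h0.ne' hin w]
    constructor <;> · simp only [iabs]; split_ifs <;> omega

lemma dis_down_zero {n : ℕ} (hn : 1 ≤ n) {w : Equiv.Perm ℤ} (hw : IsSignedPerm n w)
    (h1 : w 1 < 0) : disB n (w * sB 0) = disB n w - 2 := by
  rw [dis_mul_sB_zero hn hw]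
  simp only [iabs]; split_ifs <;> omega

lemma dis_down_pos {n : ℕ} {i : ℕ} (hi : i ≠ 0) (hin : i + 1 ≤ n) {w : Equiv.Perm ℤ}
    (ha : (i:ℤ) < w (i:ℤ)) (hb : w ((i:ℤ)+1) ≤ (i:ℤ)) :
    disB n (w * sB i) = disB n w - 2 := by
  rw [dis_mul_sB_pos hi hin w]
  simp only [iabs]; split_ifs <;> omega

lemma dis_up_zero {n : ℕ} (hn : 1 ≤ n) {w : Equiv.Perm ℤ} (hw : IsSignedPerm n w)
    (h : disB n (w * sB 0) = disB n w + 2) : 1 ≤ w 1 := by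
  rw [dis_mul_sB_zero hn hw] at h
  simp only [iabs] at h; split_ifs at h <;> omega

lemma dis_up_pos {n : ℕ} {i : ℕ} (hi : i ≠ 0) (hin : i + 1 ≤ n) {w : Equiv.Perm ℤ}
    (h : disB n (w * sB i) = disB n w + 2) :
    w (i:ℤ) ≤ (i:ℤ) ∧ (i:ℤ)+1 ≤ w ((i:ℤ)+1) := by
  rw [dis_mul_sB_pos hi hin w] at h
  simp only [iabs] at h; split_ifs at h <;> omega

lemma disB_one (n : ℕ) : disB n 1 = 0 := by
  simp [disB]

lemma word_lower {n : ℕ} : ∀ l : List ℕ, (∀ i ∈ l, i + 1 ≤ n) →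
    disB n (l.map sB).prod ≤ 2 * l.length := by
  intro l
  induction l using List.reverseRecOn with
  | nil => intro _; simp [disB_one]
  | append_singleton l a ih =>
    intro h
    have hl : ∀ i ∈ l, i + 1 ≤ n := fun i hi => h i (by simp [hi])
    have ha : a + 1 ≤ n := h a (by simp)
    have hv : IsSignedPerm n (l.map sB).prod := sp_prod l hl
    have e : ((l ++ [a]).map sB).prod = (l.map sB).prod * sB a := by
      simp
    rw [e]
    have := (dis_step hv ha).1
    have := ih hl
    simp only [List.length_append, List.length_singleton]
    push_cast
    omega

lemma unfrozen_iff {n : ℕ} {x : ℤ} : Unfrozen n x ↔ x ≠ 0 ∧ -(n:ℤ) ≤ x ∧ x ≤ (n:ℤ) := by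
  unfold Unfrozen
  rw [abs_le]

lemma unfrozen_neg {n : ℕ} {x : ℤ} (h : Unfrozen n x) : Unfrozen n (-x) := by
  rw [unfrozen_iff] at h ⊢
  omega

lemma unfrozen_sB {n : ℕ} {i : ℕ} (hin : i + 1 ≤ n) {x : ℤ} (h : Unfrozen n x) :
    Unfrozen n (sB i x) :=
  ⟨sp_ne_zero (sp_sB hin) h.1, sp_bound (sp_sB hin) h.2⟩

lemma sp_bound' {n : ℕ} {w : Equiv.Perm ℤ} (hw : IsSignedPerm n w) {x : ℤ}
    (h1 : -(n:ℤ) ≤ x) (h2 : x ≤ (n:ℤ)) : -(n:ℤ) ≤ w x ∧ w x ≤ (n:ℤ) := by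
  have := sp_bound hw (x := x) (by rw [iabs]; split_ifs <;> omega)
  rw [iabs] at this
  split_ifs at this <;> omega

lemma A1 {n : ℕ} {v : Equiv.Perm ℤ} (hv : IsSignedPerm n v) (hgc : ¬ GloballyContains321 n v)
    {i : ℤ} (hi : 1 ≤ i) (hvi : v i ≤ i) (hvi1 : i + 1 ≤ v (i+1))
    {c : ℤ} (hc : Unfrozen n c) (hic : i + 1 < c) (hvc : v c < v i) : False := by
  obtain ⟨hc0, hcn1, hcn2⟩ := unfrozen_iff.mp hc
  have hn : i + 1 < (n:ℤ) := lt_of_lt_of_le hic hcn2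
  have hui : Unfrozen n i := unfrozen_iff.mpr ⟨by omega, by omega, by omega⟩
  have T1 : ∀ x : ℤ, Unfrozen n x → x < i → v x < v i := by
    intro x hx hxi
    by_contra hcon
    push_neg at hcon
    have hne : v x ≠ v i := fun e => by have := v.injective e; omega
    exact hgc ⟨x, i, c, hx, hui, hc, hxi, by omega, by omega, by omega⟩
  set s : Finset ℤ := (Finset.Icc (-(n:ℤ)) (i-1)).erase 0 with hs
  have hmem : ∀ x ∈ s, Unfrozen n x ∧ v x < v i ∧ v x ≠ 0 ∧ -(n:ℤ) ≤ v x ∧ v x ≤ (n:ℤ) := by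
    intro x hx
    rw [hs, Finset.mem_erase, Finset.mem_Icc] at hx
    have hux : Unfrozen n x := unfrozen_iff.mpr ⟨hx.1, by omega, by omega⟩
    have hb := sp_bound' hv hx.2.1 (by omega)
    exact ⟨hux, T1 x hux (by omega), sp_ne_zero hv hx.1, hb.1, hb.2⟩
  have hinj : Set.InjOn v s := fun x _ y _ e => v.injective e
  have hcard_s : s.card = (i + (n:ℤ)).toNat - 1 := by
    rw [hs, Finset.card_erase_of_mem (by rw [Finset.mem_Icc]; omega), Int.card_Icc]
    congr 1
    omega
  have hvii : v i = i := by
    by_contra hne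
    have hvi' : v i < i := by omega
    set t : Finset ℤ := (Finset.Icc (-(n:ℤ)) (v i - 1)).erase 0 with ht
    have hsub : ∀ x ∈ s, v x ∈ t := by
      intro x hx
      obtain ⟨_, h1, h2, h3, _⟩ := hmem x hx
      rw [ht, Finset.mem_erase, Finset.mem_Icc]
      exact ⟨h2, h3, by omega⟩
    have hle := Finset.card_le_card_of_injOn v hsub hinj
    have hcard_t : t.card ≤ (v i + (n:ℤ)).toNat := by
      rw [ht]
      calc ((Finset.Icc (-(n:ℤ)) (v i - 1)).erase 0).card
          ≤ (Finset.Icc (-(n:ℤ)) (v i - 1)).card := Finset.card_erase_le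
        _ = (v i + (n:ℤ)).toNat := by rw [Int.card_Icc]; congr 1; omega
    rw [hcard_s] at hle
    rcases lt_or_ge (v i) 1 with hneg | hpos
    · have : v i ≠ 0 := sp_ne_zero hv (by omega : i ≠ 0)
      omega
    · have hcard_t' : t.card = (v i + (n:ℤ)).toNat - 1 := by
        rw [ht, Finset.card_erase_of_mem (by rw [Finset.mem_Icc]; omega), Int.card_Icc]
        congr 1
        omega
      rw [hcard_t'] at hle
      omega
  have hsub : ∀ x ∈ s, v x ∈ s := by
    intro x hx
    obtain ⟨_, h1, h2, h3, _⟩ := hmem x hx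
    rw [hs, Finset.mem_erase, Finset.mem_Icc]
    exact ⟨h2, h3, by omega⟩
  have himg : s.image v = s := by
    apply Finset.eq_of_subset_of_card_le
    · intro y hy
      rw [Finset.mem_image] at hy
      obtain ⟨x, hx, rfl⟩ := hy
      exact hsub x hx
    · rw [Finset.card_image_of_injOn hinj]
  have hvc_mem : v c ∈ s := by
    have hb := sp_bound' hv hcn1 hcn2
    rw [hs, Finset.mem_erase, Finset.mem_Icc]
    exact ⟨sp_ne_zero hv hc0, hb.1, by omega⟩
  rw [← himg, Finset.mem_image] at hvc_mem
  obtain ⟨x, hx, hxe⟩ := hvc_mem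
  have : x = c := v.injective hxe
  subst this
  rw [hs, Finset.mem_erase, Finset.mem_Icc] at hx
  omega

lemma A2 {n : ℕ} {v : Equiv.Perm ℤ} (hv : IsSignedPerm n v) (hgc : ¬ GloballyContains321 n v)
    {i : ℤ} (hi : 1 ≤ i) (hin : i + 1 ≤ (n:ℤ)) (hvi : v i ≤ i) (hvi1 : i + 1 ≤ v (i+1))
    {a : ℤ} (ha : Unfrozen n a) (hai : a < i) (hva : v (i+1) < v a) : False := by
  obtain ⟨ha0, han1, han2⟩ := unfrozen_iff.mp ha
  have hui1 : Unfrozen n (i+1) := unfrozen_iff.mpr ⟨by omega, by omega, by omega⟩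
  have S2 : ∀ z : ℤ, Unfrozen n z → i + 1 < z → v (i+1) < v z := by
    intro z hz hiz
    by_contra hcon
    push_neg at hcon
    have hne : v z ≠ v (i+1) := fun e => by have := v.injective e; omega
    exact hgc ⟨a, i+1, z, ha, hui1, hz, by omega, hiz, by omega, by omega⟩
  set s : Finset ℤ := Finset.Icc (i+2) (n:ℤ) with hs
  have hsub : ∀ z ∈ s, v z ∈ s := by
    intro z hz
    rw [hs, Finset.mem_Icc] at hz ⊢
    have huz : Unfrozen n z := unfrozen_iff.mpr ⟨by omega, by omega, by omega⟩
    have hb := sp_bound' hv (x := z) (by omega) (by omega)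
    have := S2 z huz (by omega)
    omega
  have hinj : Set.InjOn v s := fun x _ y _ e => v.injective e
  have himg : s.image v = s := by
    apply Finset.eq_of_subset_of_card_le
    · intro y hy
      rw [Finset.mem_image] at hy
      obtain ⟨x, hx, rfl⟩ := hy
      exact hsub x hx
    · rw [Finset.card_image_of_injOn hinj]
  have hvii : v (i+1) = i + 1 := by
    by_contra hne
    have h1 : i + 2 ≤ v (i+1) := by omega
    have hb := sp_bound' hv (x := i+1) (by omega) (by omega)
    have hmem : v (i+1) ∈ s := by rw [hs, Finset.mem_Icc]; omega
    rw [← himg, Finset.mem_image] at hmem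
    obtain ⟨x, hx, hxe⟩ := hmem
    have : x = i + 1 := v.injective hxe
    subst this
    rw [hs, Finset.mem_Icc] at hx
    omega
  have hb := sp_bound' hv han1 han2
  have hmem : v a ∈ s := by rw [hs, Finset.mem_Icc]; omega
  rw [← himg, Finset.mem_image] at hmem
  obtain ⟨x, hx, hxe⟩ := hmem
  have : x = a := v.injective hxe
  subst this
  rw [hs, Finset.mem_Icc] at hx
  omega

lemma sB0_lt {x y : ℤ} (hxy : x < y) (hx : x ≠ 0) (hy : y ≠ 0)
    (hne : ¬(x = -1 ∧ y = 1)) : sB 0 x < sB 0 y := by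
  simp only [sB_zero_apply]
  split_ifs <;> omega

lemma sBpos_lt {i : ℕ} (hi : i ≠ 0) {x y : ℤ} (hxy : x < y)
    (h1 : ¬(x = (i:ℤ) ∧ y = (i:ℤ)+1)) (h2 : ¬(x = -((i:ℤ)+1) ∧ y = -(i:ℤ))) :
    sB i x < sB i y := by
  have hi' : (1:ℤ) ≤ (i:ℤ) := by exact_mod_cast Nat.one_le_iff_ne_zero.mpr hi
  simp only [sB_pos_apply i hi]
  split_ifs <;> omega

lemma avoid_mul_sB_zero {n : ℕ} {v : Equiv.Perm ℤ} (hv : IsSignedPerm n v)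
    (hgc : ¬ GloballyContains321 n v) : ¬ GloballyContains321 n (v * sB 0) := by
  rintro ⟨a, b, c, ha, hb, hc, hab, hbc, v1, v2⟩
  simp only [Equiv.Perm.mul_apply] at v1 v2
  have hvm : ∀ x : ℤ, v (-x) = -(v x) := hv.1
  have sb1 : sB 0 (1:ℤ) = -1 := by rw [sB_zero_apply]; norm_num
  have hn1 : 0 + 1 ≤ n := by have := unfrozen_iff.mp ha; omega
  have sbm1 : sB 0 (-1:ℤ) = 1 := by rw [sB_zero_apply]; norm_num
  by_cases hab1 : a = -1 ∧ b = 1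
  · obtain ⟨rfl, rfl⟩ := hab1
    rw [sbm1] at v1
    rw [sb1] at v1 v2
    have hc2 : 2 ≤ c := by have := hc.1; omega
    have hsc : sB 0 c = c := by rw [sB_zero_apply]; split_ifs <;> omega
    rw [hsc] at v2
    rw [hvm 1] at v1 v2
    have hv1pos : 0 < v 1 := by omega
    refine hgc ⟨-c, 1, c, unfrozen_neg hc, ?_, hc, by omega, by omega, ?_, by omega⟩
    · exact unfrozen_iff.mpr ⟨by omega, by have := (unfrozen_iff.mp hc).2.2; omega, by have := (unfrozen_iff.mp hc).2.2; omega⟩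
    · rw [hvm c]; omega
  by_cases hbc1 : b = -1 ∧ c = 1
  · obtain ⟨rfl, rfl⟩ := hbc1
    rw [sbm1] at v1 v2
    rw [sb1] at v2
    have ha2 : a ≤ -2 := by have := ha.1; omega
    have hsa : sB 0 a = a := by rw [sB_zero_apply]; split_ifs <;> omega
    rw [hsa] at v1
    rw [hvm 1] at v2
    have hv1pos : 0 < v 1 := by omega
    refine hgc ⟨a, 1, -a, ha, ?_, unfrozen_neg ha, by omega, by omega, by omega, ?_⟩
    · exact unfrozen_iff.mpr ⟨by omega, by have := (unfrozen_iff.mp ha).2.2; omega, by have := (unfrozen_iff.mp ha).2.1; omega⟩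
    · rw [hvm a]; omega
  by_cases hac1 : a = -1 ∧ c = 1
  · obtain ⟨rfl, rfl⟩ := hac1
    have := hb.1
    omega
  · have hoab : sB 0 a < sB 0 b := sB0_lt hab ha.1 hb.1 hab1
    have hobc : sB 0 b < sB 0 c := sB0_lt hbc hb.1 hc.1 hbc1
    exact hgc ⟨sB 0 a, sB 0 b, sB 0 c, unfrozen_sB hn1 ha,
      unfrozen_sB hn1 hb, unfrozen_sB hn1 hc, hoab, hobc, v1, v2⟩

lemma avoid_mul_sB_desc {n : ℕ} {w : Equiv.Perm ℤ} (hw : IsSignedPerm n w)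
    (hgc : ¬ GloballyContains321 n w) {i : ℕ} (hi : i ≠ 0) (hin : i + 1 ≤ n)
    (hdi : (i:ℤ) < w (i:ℤ)) (hdi1 : w ((i:ℤ)+1) ≤ (i:ℤ)) :
    ¬ GloballyContains321 n (w * sB i) := by
  rintro ⟨a, b, c, ha, hb, hc, hab, hbc, v1, v2⟩
  simp only [Equiv.Perm.mul_apply] at v1 v2
  have hi' : (1:ℤ) ≤ (i:ℤ) := by exact_mod_cast Nat.one_le_iff_ne_zero.mpr hi
  have hvm : ∀ x : ℤ, w (-x) = -(w x) := hw.1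
  have sbi : sB i (i:ℤ) = (i:ℤ)+1 := by rw [sB_pos_apply i hi]; split_ifs <;> omega
  have sbi1 : sB i ((i:ℤ)+1) = (i:ℤ) := by rw [sB_pos_apply i hi]; split_ifs <;> omega
  have sbmi : sB i (-(i:ℤ)) = -((i:ℤ)+1) := by rw [sB_pos_apply i hi]; split_ifs <;> omega
  have sbmi1 : sB i (-((i:ℤ)+1)) = -(i:ℤ) := by rw [sB_pos_apply i hi]; split_ifs <;> omega
  by_cases h1 : a = (i:ℤ) ∧ b = (i:ℤ)+1
  · obtain ⟨ea, eb⟩ := h1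
    rw [ea, eb, sbi, sbi1] at v1
    omega
  by_cases h2 : b = (i:ℤ) ∧ c = (i:ℤ)+1
  · obtain ⟨eb, ec⟩ := h2
    rw [eb, ec, sbi, sbi1] at v2
    omega
  by_cases h3 : a = -((i:ℤ)+1) ∧ b = -(i:ℤ)
  · obtain ⟨ea, eb⟩ := h3
    rw [ea, eb, sbmi, sbmi1, hvm ((i:ℤ)+1), hvm (i:ℤ)] at v1
    omega
  by_cases h4 : b = -((i:ℤ)+1) ∧ c = -(i:ℤ)
  · obtain ⟨eb, ec⟩ := h4
    rw [eb, ec, sbmi, sbmi1, hvm ((i:ℤ)+1), hvm (i:ℤ)] at v2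
    omega
  · have hoab : sB i a < sB i b := sBpos_lt hi hab h1 h3
    have hobc : sB i b < sB i c := sBpos_lt hi hbc h2 h4
    exact hgc ⟨sB i a, sB i b, sB i c, unfrozen_sB hin ha,
      unfrozen_sB hin hb, unfrozen_sB hin hc, hoab, hobc, v1, v2⟩

lemma avoid_mul_sB_asc {n : ℕ} {v : Equiv.Perm ℤ} (hv : IsSignedPerm n v)
    (hgc : ¬ GloballyContains321 n v) {i : ℕ} (hi : i ≠ 0) (hin : i + 1 ≤ n)
    (hvi : v (i:ℤ) ≤ (i:ℤ)) (hvi1 : (i:ℤ)+1 ≤ v ((i:ℤ)+1)) :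
    ¬ GloballyContains321 n (v * sB i) := by
  rintro ⟨a, b, c, ha, hb, hc, hab, hbc, v1, v2⟩
  simp only [Equiv.Perm.mul_apply] at v1 v2
  have hi' : (1:ℤ) ≤ (i:ℤ) := by exact_mod_cast Nat.one_le_iff_ne_zero.mpr hi
  have hin' : (i:ℤ) + 1 ≤ (n:ℤ) := by exact_mod_cast hin
  have hvm : ∀ x : ℤ, v (-x) = -(v x) := hv.1
  have hsym : ∀ x : ℤ, sB i (-x) = -(sB i x) := (sp_sB hin).1
  have sbi : sB i (i:ℤ) = (i:ℤ)+1 := by rw [sB_pos_apply i hi]; split_ifs <;> omega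
  have sbi1 : sB i ((i:ℤ)+1) = (i:ℤ) := by rw [sB_pos_apply i hi]; split_ifs <;> omega
  have sbmi : sB i (-(i:ℤ)) = -((i:ℤ)+1) := by rw [sB_pos_apply i hi]; split_ifs <;> omega
  have sbmi1 : sB i (-((i:ℤ)+1)) = -(i:ℤ) := by rw [sB_pos_apply i hi]; split_ifs <;> omega
  by_cases h1 : a = (i:ℤ) ∧ b = (i:ℤ)+1
  · obtain ⟨ea, eb⟩ := h1
    subst ea; subst eb
    have hcgt : (i:ℤ) + 1 < c := hbc
    have hsc : sB i c = c := by
      have := hc.1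
      rw [sB_pos_apply i hi]; split_ifs <;> omega
    rw [sbi1, hsc] at v2
    exact A1 hv hgc hi' hvi hvi1 hc hcgt v2
  by_cases h2 : b = (i:ℤ) ∧ c = (i:ℤ)+1
  · obtain ⟨eb, ec⟩ := h2
    subst eb; subst ec
    rw [sbi] at v1
    have ha' : sB i a < (i:ℤ) := by
      rw [sB_pos_apply i hi]; split_ifs <;> omega
    exact A2 hv hgc hi' hin' hvi hvi1 (unfrozen_sB hin ha) ha' v1
  by_cases h3 : a = -((i:ℤ)+1) ∧ b = -(i:ℤ)
  · obtain ⟨ea, eb⟩ := h3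
    subst ea; subst eb
    rw [sbmi] at v2
    rw [hvm ((i:ℤ)+1)] at v2
    -- v2 : -(v (i+1)) > v (sB i c)
    by_cases hci : c = (i:ℤ)
    · subst hci
      rw [sbi] at v2
      omega
    · have hc' : -c < (i:ℤ) := by omega
      have ha'lt : sB i (-c) < (i:ℤ) := by
        rw [sB_pos_apply i hi]; split_ifs <;> omega
      have hkey : v ((i:ℤ)+1) < v (sB i (-c)) := by
        rw [hsym c, hvm (sB i c)]
        omega
      exact A2 hv hgc hi' hin' hvi hvi1 (unfrozen_sB hin (unfrozen_neg hc)) ha'lt hkey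
  by_cases h4 : b = -((i:ℤ)+1) ∧ c = -(i:ℤ)
  · obtain ⟨eb, ec⟩ := h4
    subst eb; subst ec
    rw [sbmi1, hvm (i:ℤ)] at v1
    -- v1 : v (sB i a) > -(v i) ; a < -(i+1)
    have hsa : sB i a = a := by
      rw [sB_pos_apply i hi]; split_ifs <;> omega
    rw [hsa] at v1
    have hkey : v (-a) < v (i:ℤ) := by rw [hvm a]; omega
    exact A1 hv hgc hi' hvi hvi1 (unfrozen_neg ha) (by omega) hkey
  · have hoab : sB i a < sB i b := sBpos_lt hi hab h1 h3
    have hobc : sB i b < sB i c := sBpos_lt hi hbc h2 h4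
    exact hgc ⟨sB i a, sB i b, sB i c, unfrozen_sB hin ha,
      unfrozen_sB hin hb, unfrozen_sB hin hc, hoab, hobc, v1, v2⟩

lemma MCL {n : ℕ} {w : Equiv.Perm ℤ} (hw : IsSignedPerm n w) (hn : 1 ≤ n)
    (hgc : ¬ GloballyContains321 n w) (hne : ∃ j : ℤ, 1 ≤ j ∧ j ≤ (n:ℤ) ∧ w j ≠ j) :
    w 1 < 0 ∨ ∃ i : ℕ, i ≠ 0 ∧ i + 1 ≤ n ∧ (i:ℤ) < w (i:ℤ) ∧ w ((i:ℤ)+1) ≤ (i:ℤ) := by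
  by_contra hcon
  push_neg at hcon
  obtain ⟨hpos, hnod⟩ := hcon
  have h1 : 1 ≤ w 1 := by
    have := sp_ne_zero hw (show (1:ℤ) ≠ 0 by omega)
    omega
  have C : ∀ m : ℕ, ∀ j : ℤ, j = 1 + (m:ℤ) → j ≤ (n:ℤ) → j ≤ w j := by
    intro m
    induction m using Nat.strong_induction_on with
    | _ m IH =>
      intro j hj hjn
      rcases Nat.eq_zero_or_pos m with rfl | hm
      · have : j = 1 := by omega
        rw [this]; exact h1
      · by_contra hcj
        push_neg at hcj
        have IH' : ∀ j' : ℤ, 1 ≤ j' → j' < j → j' ≤ (n:ℤ) → j' ≤ w j' := by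
          intro j' h1' h2' h3'
          have hlt : (j' - 1).toNat < m := by omega
          exact IH _ hlt j' (by omega) h3'
        have hj2 : 2 ≤ j := by omega
        have hj1 : w (j - 1) = j - 1 := by
          have hle : j - 1 ≤ w (j-1) := IH' (j-1) (by omega) (by omega) (by omega)
          by_contra hne'
          have hgt : j - 1 < w (j-1) := by omega
          have hieq : (((j-1).toNat : ℕ) : ℤ) = j - 1 := by omega
          have hstep := hnod (j-1).toNat (by omega) (by omega)
            (by rw [hieq]; exact hgt)
          rw [hieq] at hstep
          have e2 : j - 1 + 1 = j := by ring
          rw [e2] at hstep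
          omega
        have FIX : ∀ t : ℕ, ∀ k : ℤ, k = j - 1 - (t:ℤ) → 1 ≤ k →
            ∀ m' : ℤ, k ≤ m' → m' ≤ j - 1 → w m' = m' := by
          intro t
          induction t with
          | zero =>
            intro k hk h1k m' hm1 hm2
            have : m' = j - 1 := by omega
            rw [this]; exact hj1
          | succ t iht =>
            intro k hk h1k m' hm1 hm2
            by_cases hm' : k + 1 ≤ m'
            · exact iht (k+1) (by push_cast; omega) (by omega) m' hm' hm2
            · have hmk : m' = k := by omega
              subst hmk
              have hk1 : m' ≤ w m' := IH' m' h1k (by omega) (by omega)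
              by_contra hnk
              have hgtk : m' < w m' := by omega
              have hbig : j ≤ w m' := by
                by_contra hsm
                push_neg at hsm
                have hfix : w (w m') = w m' := iht (m'+1) (by push_cast; omega) (by omega)
                  (w m') (by omega) (by omega)
                have := w.injective hfix
                omega
              have hwj : w j ≤ j - 2 := by
                have hne2 : w j ≠ j - 1 := fun e => by
                  have := w.injective (e.trans hj1.symm); omega
                omega
              refine absurd ⟨m', j-1, j, ?_, ?_, ?_, by omega, by omega, ?_, ?_⟩ hgc
              · exact unfrozen_iff.mpr ⟨by omega, by omega, by omega⟩
              · exact unfrozen_iff.mpr ⟨by omega, by omega, by omega⟩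
              · exact unfrozen_iff.mpr ⟨by omega, by omega, by omega⟩
              · rw [hj1]; omega
              · rw [hj1]; omega
        have hfixall : ∀ m' : ℤ, 1 ≤ m' → m' ≤ j - 1 → w m' = m' := by
          intro m' h1' h2'
          exact FIX (j - 2).toNat 1 (by omega) (by omega) m' h1' h2'
        have hwj0 : w j ≠ 0 := sp_ne_zero hw (by omega)
        have hwjneg : w j < 0 := by
          by_contra hpos'
          push_neg at hpos'
          have hfix : w (w j) = w j := hfixall (w j) (by omega) (by omega)
          have := w.injective hfix
          omega
        have hv : w (-j) = -(w j) := hw.1 j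
        have hvj : j ≤ -(w j) := by
          by_contra hvs
          push_neg at hvs
          have hfix : w (-(w j)) = -(w j) := hfixall (-(w j)) (by omega) (by omega)
          have : -(w j) = -j := w.injective (hfix.trans hv.symm)
          omega
        refine absurd ⟨-j, j-1, j, ?_, ?_, ?_, by omega, by omega, ?_, ?_⟩ hgc
        · exact unfrozen_iff.mpr ⟨by omega, by omega, by omega⟩
        · exact unfrozen_iff.mpr ⟨by omega, by omega, by omega⟩
        · exact unfrozen_iff.mpr ⟨by omega, by omega, by omega⟩
        · rw [hv, hj1]; omega
        · rw [hj1]; omega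
  have hC : ∀ j : ℤ, 1 ≤ j → j ≤ (n:ℤ) → j ≤ w j := fun j hj1 hjn =>
    C (j-1).toNat j (by omega) hjn
  obtain ⟨j0, hj01, hj0n, hj0ne⟩ := hne
  set s : Finset ℤ := Finset.Icc (1:ℤ) (n:ℤ) with hs
  have hinj : Set.InjOn w s := fun x _ y _ e => w.injective e
  have hsub : ∀ x ∈ s, w x ∈ s := by
    intro x hx
    rw [hs, Finset.mem_Icc] at hx ⊢
    have hb := sp_bound' hw (x := x) (by omega) (by omega)
    have := hC x hx.1 hx.2
    omega
  have himg : s.image w = s := by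
    apply Finset.eq_of_subset_of_card_le
    · intro y hy
      rw [Finset.mem_image] at hy
      obtain ⟨x, hx, rfl⟩ := hy
      exact hsub x hx
    · rw [Finset.card_image_of_injOn hinj]
  have hsum : ∑ x ∈ s, w x = ∑ x ∈ s, x := by
    conv_rhs => rw [← himg]
    rw [Finset.sum_image (fun x hx y hy e => w.injective e)]
  have hzero : ∑ x ∈ s, (w x - x) = 0 := by
    rw [Finset.sum_sub_distrib, hsum]
    omega
  have := (Finset.sum_eq_zero_iff_of_nonneg (fun x hx => by
    rw [hs, Finset.mem_Icc] at hx
    have := hC x hx.1 hx.2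
    omega)).mp hzero j0 (by rw [hs, Finset.mem_Icc]; omega)
  omega

lemma avoid_of_fixed {n : ℕ} {w : Equiv.Perm ℤ} (h : ∀ x : ℤ, Unfrozen n x → w x = x) :
    ¬ GloballyContains321 n w := by
  rintro ⟨a, b, c, ha, hb, hc, hab, hbc, v1, v2⟩
  rw [h a ha, h b hb] at v1
  omega

lemma avoid_of_dis_zero {n : ℕ} {w : Equiv.Perm ℤ} (hw : IsSignedPerm n w)
    (h : disB n w = 0) : ¬ GloballyContains321 n w := by
  apply avoid_of_fixed
  intro x hx
  obtain ⟨hx0, hx1, hx2⟩ := unfrozen_iff.mp hx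
  rcases lt_or_ge x 0 with hneg | hpos
  · have : w (-x) = -x := dis_eq_zero h (by rw [Finset.mem_Icc]; omega)
    have e := hw.1 (-x)
    rw [this] at e
    simp at e
    omega
  · exact dis_eq_zero h (by rw [Finset.mem_Icc]; omega)

lemma geodesic {n : ℕ} : ∀ l : List ℕ, (∀ i ∈ l, i + 1 ≤ n) →
    disB n (l.map sB).prod = 2 * l.length → ¬ GloballyContains321 n (l.map sB).prod := by
  intro l
  induction l using List.reverseRecOn with
  | nil =>
    intro _ _
    exact avoid_of_fixed fun x _ => rfl
  | append_singleton l a ih =>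
    intro hmem hdis
    have hl : ∀ i ∈ l, i + 1 ≤ n := fun i hi => hmem i (by simp [hi])
    have ha : a + 1 ≤ n := hmem a (by simp)
    have hv : IsSignedPerm n (l.map sB).prod := sp_prod l hl
    have e : ((l ++ [a]).map sB).prod = (l.map sB).prod * sB a := by simp
    rw [e] at hdis ⊢
    simp only [List.length_append, List.length_singleton] at hdis
    push_cast at hdis
    have hub : disB n (l.map sB).prod ≤ 2 * l.length := word_lower l hl
    have hst := (dis_step hv ha).1
    have hdv : disB n (l.map sB).prod = 2 * l.length := by omega
    have hgcv : ¬ GloballyContains321 n (l.map sB).prod := ih hl hdv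
    have hup : disB n ((l.map sB).prod * sB a) = disB n (l.map sB).prod + 2 := by omega
    rcases Nat.eq_zero_or_pos a with rfl | hapos
    · exact avoid_mul_sB_zero hv hgcv
    · obtain ⟨c1, c2⟩ := dis_up_pos hapos.ne' ha hup
      exact avoid_mul_sB_asc hv hgcv hapos.ne' ha c1 c2

lemma construct {n : ℕ} (hn : 1 ≤ n) : ∀ d : ℕ, ∀ w : Equiv.Perm ℤ, IsSignedPerm n w →
    ¬ GloballyContains321 n w → (disB n w).toNat = d →
    ∃ l : List ℕ, IsWordB n w l ∧ 2 * (l.length : ℤ) = disB n w := by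
  intro d
  induction d using Nat.strong_induction_on with
  | _ d IHd =>
    intro w hw hgc hd
    by_cases hfix : ∀ j : ℤ, 1 ≤ j → j ≤ (n:ℤ) → w j = j
    · have hw1 : w = 1 := by
        have hdz : disB n w = 0 := by
          apply Finset.sum_eq_zero
          intro x hx
          rw [Finset.mem_Icc] at hx
          rw [hfix x hx.1 hx.2]
          simp
        ext x
        simp only [Equiv.Perm.one_apply]
        rcases lt_trichotomy x 0 with hneg | rfl | hpos
        · rcases le_or_gt (-(n:ℤ)) x with hge | hlt
          · have : w (-x) = -x := hfix (-x) (by omega) (by omega)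
            have e := hw.1 (-x)
            rw [this] at e
            simp at e
            omega
          · exact hw.2 x (by rw [iabs]; split_ifs <;> omega)
        · exact sp_zero hw
        · rcases le_or_gt x (n:ℤ) with hle | hlt
          · exact hfix x (by omega) hle
          · exact hw.2 x (by rw [iabs]; split_ifs <;> omega)
      refine ⟨[], ⟨by simp, by simp [hw1]⟩, ?_⟩
      subst hw1
      simp [disB_one]
    · push_neg at hfix
      obtain ⟨j0, hj01, hj0n, hj0ne⟩ := hfix
      have hdpos : 1 ≤ disB n w := dis_pos (by rw [Finset.mem_Icc]; exact ⟨hj01, hj0n⟩) hj0ne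
      rcases MCL hw hn hgc ⟨j0, hj01, hj0n, hj0ne⟩ with hneg | ⟨i, hi0, hin, hcr1, hcr2⟩
      · set w' := w * sB 0 with hw'def
        have hw' : IsSignedPerm n w' := sp_mul hw (sp_sB hn)
        have hgc' : ¬ GloballyContains321 n w' := avoid_mul_sB_zero hw hgc
        have hdis' : disB n w' = disB n w - 2 := dis_down_zero hn hw hneg
        have h0 := dis_nonneg n w'
        obtain ⟨l', hl', hlen'⟩ := IHd (disB n w').toNat (by omega) w' hw' hgc' rfl
        refine ⟨l' ++ [0], ⟨?_, ?_⟩, ?_⟩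
        · intro i hi
          rcases List.mem_append.mp hi with h | h
          · exact hl'.1 i h
          · simp at h; omega
        · have : ((l' ++ [0]).map sB).prod = (l'.map sB).prod * sB 0 := by simp
          rw [this, hl'.2, hw'def, mul_assoc, sB_sq, mul_one]
        · simp only [List.length_append, List.length_singleton]
          push_cast
          omega
      · set w' := w * sB i with hw'def
        have hw' : IsSignedPerm n w' := sp_mul hw (sp_sB hin)
        have hgc' : ¬ GloballyContains321 n w' := avoid_mul_sB_desc hw hgc hi0 hin hcr1 hcr2
        have hdis' : disB n w' = disB n w - 2 := dis_down_pos hi0 hin hcr1 hcr2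
        have h0 := dis_nonneg n w'
        obtain ⟨l', hl', hlen'⟩ := IHd (disB n w').toNat (by omega) w' hw' hgc' rfl
        refine ⟨l' ++ [i], ⟨?_, ?_⟩, ?_⟩
        · intro k hk
          rcases List.mem_append.mp hk with h | h
          · exact hl'.1 k h
          · simp at h; omega
        · have : ((l' ++ [i]).map sB).prod = (l'.map sB).prod * sB i := by simp
          rw [this, hl'.2, hw'def, mul_assoc, sB_sq, mul_one]
        · simp only [List.length_append, List.length_singleton]
          push_cast
          omega


theorem stmt_3 (n : ℕ) (hn : 1 ≤ n) (w : Equiv.Perm ℤ) (hw : IsSignedPerm n w) :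
    disB n w = 2 * (lenB n w : ℤ) ↔ ¬ GloballyContains321 n w := by
  constructor
  · intro hdis
    by_cases hne : {m | ∃ l : List ℕ, IsWordB n w l ∧ l.length = m}.Nonempty
    · have hmem := Nat.sInf_mem hne
      obtain ⟨l0, hl0, hlen0⟩ := hmem
      have hlen0' : (l0.length : ℤ) = (lenB n w : ℤ) := by
        rw [hlen0]; rfl
      have hg : disB n ((l0.map sB).prod) = 2 * l0.length := by
        rw [hl0.2, hdis]
        push_cast [hlen0']
        ring
      have := geodesic l0 hl0.1 hg
      rwa [hl0.2] at this
    · have hlen : lenB n w = 0 := by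
        rw [Set.not_nonempty_iff_eq_empty] at hne
        rw [lenB, hne]
        exact Nat.sInf_empty
      rw [hlen] at hdis
      simp at hdis
      exact avoid_of_dis_zero hw hdis
  · intro hgc
    obtain ⟨l, hl, hlen⟩ := construct hn (disB n w).toNat w hw hgc rfl
    have hup : lenB n w ≤ l.length := Nat.sInf_le ⟨l, hl, rfl⟩
    have hnonempty : {m | ∃ l : List ℕ, IsWordB n w l ∧ l.length = m}.Nonempty :=
      ⟨l.length, l, hl, rfl⟩
    obtain ⟨l0, hl0, hlen0⟩ := Nat.sInf_mem hnonempty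
    have hlb : disB n w ≤ 2 * (lenB n w : ℤ) := by
      have h1 := word_lower l0 hl0.1
      rw [hl0.2] at h1
      have : (l0.length : ℤ) = (lenB n w : ℤ) := by
        have := hlen0
        unfold lenB
        exact_mod_cast congrArg Nat.cast this
      omega
    have hub2 : (2 : ℤ) * (lenB n w : ℤ) ≤ 2 * (l.length : ℤ) := by
      have : ((lenB n w : ℕ) : ℤ) ≤ (l.length : ℤ) := by exact_mod_cast hup
      omega
    omega

end Stmt3
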